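/- Let 0 < q < 1/6 and let x = (3, 2, 3q, 2q, 3q², 2q², …) be the multigeometric sequence (3,2; q). Then the series ∑_{n} x_n is fast convergent, and its achievement set satisfies E(x) = (5/(1−q))·C(a), where a = (a_n) is the 2-periodic sequence given by a_{2n−1} = (1−6q)/5 and a_{2n} = (2−7q)/(2+3q) for all n ∈ ℕ. -/

import Mathlib

open Pointwise MeasureTheory

namespace CCS

/-- `dSeq a n` is the common length `d_n = ∏_{i=1}^n (1 - a_i)/2` of the intervals of the
`n`-th step of the construction of the central Cantor set `C(a)` (`d_0 = 1`).
The sequence `a` is indexed from `1`; the value `a 0` is irrelevant. -/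
noncomputable def dSeq (a : ℕ → ℝ) (n : ℕ) : ℝ :=
  ∏ i ∈ Finset.Icc 1 n, ((1 - a i) / 2)

/-- Left endpoint of the interval `I_t`, `t ∈ {0,1}^n` (coded as a list, the paper's
`t_j` being `t.getD (j-1) 0`): `l(I_t) = ∑_{j=1}^n t_j (d_{j-1} - d_j)`. -/
noncomputable def Il (a : ℕ → ℝ) (t : List ℕ) : ℝ :=
  ∑ j ∈ Finset.range t.length, (t.getD j 0 : ℝ) * (dSeq a j - dSeq a (j + 1))

/-- The `n`-th step `C_n(a)` of the construction of the central Cantor set: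
the union of the intervals `I_t = [l(I_t), l(I_t) + d_n]` over `t ∈ {0,1}^n`. -/
noncomputable def cantorStep (a : ℕ → ℝ) (n : ℕ) : Set ℝ :=
  ⋃ t ∈ {t : List ℕ | t.length = n ∧ ∀ j ∈ t, j ≤ 1},
    Set.Icc (Il a t) (Il a t + dSeq a n)

/-- The central Cantor set `C(a) = ⋂ₙ C_n(a)`. -/
noncomputable def cantorSet (a : ℕ → ℝ) : Set ℝ := ⋂ n, cantorStep a n

/-- Left endpoint of the interval `J_s = I_t - I_p`, for `s ∈ {0,1,2}^n`:
`l(J_s) = -1 + ∑_{j=1}^n s_j (d_{j-1} - d_j)`. -/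
noncomputable def Jl (a : ℕ → ℝ) (s : List ℕ) : ℝ :=
  -1 + ∑ j ∈ Finset.range s.length, (s.getD j 0 : ℝ) * (dSeq a j - dSeq a (j + 1))

/-- Right endpoint of `J_s`: `r(J_s) = l(J_s) + 2 d_n`. -/
noncomputable def Jr (a : ℕ → ℝ) (s : List ℕ) : ℝ :=
  Jl a s + 2 * dSeq a s.length

/-- The interval `J_s`. -/
noncomputable def Jset (a : ℕ → ℝ) (s : List ℕ) : Set ℝ := Set.Icc (Jl a s) (Jr a s)

/-- Left endpoint of the gap `G^i_s` (`i = 0`: left gap, `i = 1`: right gap) of `J_s`. -/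
noncomputable def Gl (a : ℕ → ℝ) (i : ℕ) (s : List ℕ) : ℝ :=
  Jl a s + (i : ℝ) * (dSeq a s.length - dSeq a (s.length + 1)) + 2 * dSeq a (s.length + 1)

/-- Right endpoint of the gap `G^i_s`. -/
noncomputable def Gr (a : ℕ → ℝ) (i : ℕ) (s : List ℕ) : ℝ :=
  Jl a s + ((i : ℝ) + 1) * (dSeq a s.length - dSeq a (s.length + 1))

/-- The gap `G^i_s ⊆ J_s`, an open interval. -/
noncomputable def Gset (a : ℕ → ℝ) (i : ℕ) (s : List ℕ) : Set ℝ :=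
  Set.Ioo (Gl a i s) (Gr a i s)

/-- `N(0,s) = max {j : s_j > 0}`, `N(1,s) = max {j : s_j < 2}` (1-based, `max ∅ = 0`). -/
noncomputable def Nidx (i : ℕ) (s : List ℕ) : ℕ :=
  sSup {j | 1 ≤ j ∧ j ≤ s.length ∧
    (if i = 0 then 0 < s.getD (j - 1) 0 else s.getD (j - 1) 0 < 2)}

/-- The family `𝒢^{i0}_{s0}(n)` of (indices of) gaps of rank `n`, for
`s0 ∈ {0,1,2}^{k_m - 1}`; a gap `G^i_s` is coded by the pair `(i, s)`.
`𝒢^{i0}_{s0}(m) = {G^{i0}_{s0}}` and for `n > m`,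
`𝒢^{i0}_{s0}(n)` consists of the gap `Ḡ^{i0}_{s0}(n)` together with the gaps
`Ḡ^1_{t^j}(n)`, `Ḡ^0_{t^(j+1)}(n)` for all `G^j_t ∈ 𝒢^{i0}_{s0}(l)`, `m ≤ l < n`. -/
def gapFamily (k : ℕ → ℕ) (i0 : ℕ) (s0 : List ℕ) (m : ℕ) (n : ℕ) : Set (ℕ × List ℕ) :=
  if n ≤ m then {(i0, s0)}
  else
    {(i0, s0 ++ List.replicate (k n - k m) (2 * i0))} ∪
      ⋃ (l : ℕ) (_ : m ≤ l) (hl : l < n),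
        ⋃ p ∈ gapFamily k i0 s0 m l,
          ({(1, p.2 ++ p.1 :: List.replicate (k n - k l - 1) 2),
            (0, p.2 ++ (p.1 + 1) :: List.replicate (k n - k l - 1) 0)} : Set (ℕ × List ℕ))
termination_by n
decreasing_by exact hl

/-- The family `𝒢^{i0}_{s0} = ⋃_{n ≥ m} 𝒢^{i0}_{s0}(n)`. -/
def gapFamilyAll (k : ℕ → ℕ) (i0 : ℕ) (s0 : List ℕ) (m : ℕ) : Set (ℕ × List ℕ) :=
  ⋃ (n : ℕ) (_ : m ≤ n), gapFamily k i0 s0 m n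

/-- The family `𝒢_t := 𝒢^0_{t ++ 0^{(k_m - |t| - 1)}} ∪ 𝒢^1_{t ++ 2^{(k_m - |t| - 1)}}`
for `t ∈ {0,1,2}^k` with `k_{m-1} ≤ k < k_m`. -/
def gapFamilyT (k : ℕ → ℕ) (m : ℕ) (t : List ℕ) : Set (ℕ × List ℕ) :=
  gapFamilyAll k 0 (t ++ List.replicate (k m - t.length - 1) 0) m ∪
    gapFamilyAll k 1 (t ++ List.replicate (k m - t.length - 1) 2) m

/-- The union `⋃ 𝒢` of a family of (indices of) gaps, as a subset of `ℝ`. -/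
noncomputable def gapUnion (a : ℕ → ℝ) (G : Set (ℕ × List ℕ)) : Set ℝ :=
  ⋃ p ∈ G, Gset a p.1 p.2

/-- `padSeq k c s m n` is the index of the gap `G^i(s,n)` (for `c = 2i`):
`s ++ c^{(k_m - |s| - 1)} ++ 1 ++ c^{(k_{m+1} - k_m - 1)} ++ 1 ++ ⋯ ++ 1 ++ c^{(k_n - k_{n-1} - 1)}`. -/
def padSeq (k : ℕ → ℕ) (c : ℕ) (s : List ℕ) (m : ℕ) : ℕ → List ℕ
  | 0 => s ++ List.replicate (k m - s.length - 1) c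
  | n + 1 =>
    if n + 1 ≤ m then s ++ List.replicate (k m - s.length - 1) c
    else padSeq k c s m n ++ 1 :: List.replicate (k (n + 1) - k n - 1) c

/-- `δ_n := min {3d_i - d_{i-1} : k_{n-1} + 1 ≤ i ≤ k_n - 1}` (as an element of `EReal`,
so that `min ∅ = ⊤ = ∞`). -/
noncomputable def deltaMin (a : ℕ → ℝ) (k : ℕ → ℕ) (n : ℕ) : EReal :=
  sInf ((fun i => ((3 * dSeq a i - dSeq a (i - 1) : ℝ) : EReal)) ''
    (Set.Icc (k (n - 1) + 1) (k n - 1)))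

/-- `Δ_n := max {3d_i - d_{i-1} : k_{n-1} + 1 ≤ i ≤ k_n - 1}` (`max ∅ = ⊥ = -∞`). -/
noncomputable def deltaMax (a : ℕ → ℝ) (k : ℕ → ℕ) (n : ℕ) : EReal :=
  sSup ((fun i => ((3 * dSeq a i - dSeq a (i - 1) : ℝ) : EReal)) ''
    (Set.Icc (k (n - 1) + 1) (k n - 1)))

/-- `m_n := min { δ_n - (d_{k_n - 1} - d_{k_n}), 4 d_{k_n} - Δ_n }`. -/
noncomputable def mSeq (a : ℕ → ℝ) (k : ℕ → ℕ) (n : ℕ) : EReal :=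
  min (deltaMin a k n - ((dSeq a (k n - 1) - dSeq a (k n) : ℝ) : EReal))
    (((4 * dSeq a (k n) : ℝ) : EReal) - deltaMax a k n)

/-- `∑_{i=n+1}^∞ (d_{k_i - 1} - d_{k_i})`. -/
noncomputable def tailSum (a : ℕ → ℝ) (k : ℕ → ℕ) (n : ℕ) : ℝ :=
  ∑' i : ℕ, (dSeq a (k (n + 1 + i) - 1) - dSeq a (k (n + 1 + i)))

/-- Condition `(*)`: `m_n ≥ 2 ∑_{i=n+1}^∞ (d_{k_i - 1} - d_{k_i})` for every `n ∈ ℕ`. -/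
def condStar (a : ℕ → ℝ) (k : ℕ → ℕ) : Prop :=
  ∀ n : ℕ, 1 ≤ n → ((2 * tailSum a k n : ℝ) : EReal) ≤ mSeq a k n

/-- `(k_n)_{n ≥ 1}` is the increasing enumeration of all indices greater than `k 0 = k₀`
at which `a` exceeds `1/3`. -/
def IsGapEnum (a : ℕ → ℝ) (k : ℕ → ℕ) : Prop :=
  StrictMono k ∧ (∀ n, 1 ≤ n → k 0 < k n ∧ 1 / 3 < a (k n)) ∧
    (∀ j, k 0 < j → 1 / 3 < a j → ∃ n, 1 ≤ n ∧ k n = j)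

/-- `G` is a gap of `E`: a bounded connected component of `ℝ ∖ E`. -/
def IsGapOf (E G : Set ℝ) : Prop :=
  (∃ x ∉ E, G = connectedComponentIn Eᶜ x) ∧ Bornology.IsBounded G

/-- `C` is a proper (nontrivial) connected component of `E`. -/
def IsProperComponentOf (E C : Set ℝ) : Prop :=
  (∃ x ∈ E, C = connectedComponentIn E x) ∧ C.Nontrivial

/-- `E` is a Cantorval: a perfect set with infinitely many gaps such that both endpoints
of every gap are accumulated both by gaps and by proper components of `E`. -/
def IsCantorval (E : Set ℝ) : Prop :=
  Perfect E ∧ {G : Set ℝ | IsGapOf E G}.Infinite ∧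
    ∀ G, IsGapOf E G → ∀ p, p = sInf G ∨ p = sSup G →
      (∀ ε > 0, ∃ G', IsGapOf E G' ∧ G' ≠ G ∧ G' ⊆ Set.Ioo (p - ε) (p + ε)) ∧
      (∀ ε > 0, ∃ C, IsProperComponentOf E C ∧ C ⊆ Set.Ioo (p - ε) (p + ε))

/-- `J_s` and `J_u` (of length `k_m - 1`) are associated:
`N := N(0,s) = N(1,u) ∈ {k_{m-1}+1, …, k_m - 1}`, `s|(N-1) = u|(N-1)`, `u_N = s_N - 1`.
Then `J_u` is the interval covering `𝒢^0_s` and `J_s` is the interval covering `𝒢^1_u`. -/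
def Associated (k : ℕ → ℕ) (m : ℕ) (s u : List ℕ) : Prop :=
  s.length = k m - 1 ∧ u.length = k m - 1 ∧
    Nidx 0 s = Nidx 1 u ∧
    k (m - 1) + 1 ≤ Nidx 0 s ∧ Nidx 0 s ≤ k m - 1 ∧
    s.take (Nidx 0 s - 1) = u.take (Nidx 0 s - 1) ∧
    u.getD (Nidx 0 s - 1) 0 = s.getD (Nidx 0 s - 1) 0 - 1

/-- `G^i_g ⊂_* J_v`: the gap `G^i_g` is covered by the interval `J_v`, i.e. `G^i_g`
belongs to a family `𝒢^0_w` (resp. `𝒢^1_w`) such that `J_v` is the interval covering it. -/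
def CoversGap (k : ℕ → ℕ) (i : ℕ) (g : List ℕ) (v : List ℕ) : Prop :=
  ∃ m w, 1 ≤ m ∧
    ((Associated k m w v ∧ (i, g) ∈ gapFamilyAll k 0 w m) ∨
      (Associated k m v w ∧ (i, g) ∈ gapFamilyAll k 1 w m))

/-- The achievement set `E(x) = {∑_{j ∈ A} x_j : A ⊆ ℕ}` of a series (indexed from `1`). -/
def achievementSet (x : ℕ → ℝ) : Set ℝ :=
  {y | ∃ A : Set ℕ, A ⊆ {n | 1 ≤ n} ∧ HasSum (A.indicator x) y}


/-! ### Auxiliary development -/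

section AuxMG

/-- Closed form of `dSeq a n` for the 2-periodic sequence `a`. -/
noncomputable def Dq (q : ℝ) (n : ℕ) : ℝ :=
  if n % 2 = 1 then (2 + 3 * q) / 5 * q ^ (n / 2) else q ^ (n / 2)

variable {q : ℝ}

lemma Dq_zero : Dq q 0 = 1 := by simp [Dq]

lemma Dq_sub_succ (n : ℕ) :
    Dq q n - Dq q (n + 1) =
      (if (n + 1) % 2 = 1 then (3 - 3 * q) / 5 else (2 - 2 * q) / 5) * q ^ (n / 2) := by
  rcases Nat.even_or_odd n with ⟨l, hl⟩ | ⟨l, hl⟩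
  · subst hl
    have h1 : (l + l) % 2 = 0 := by omega
    have h2 : (l + l) / 2 = l := by omega
    have h3 : (l + l + 1) % 2 = 1 := by omega
    have h4 : (l + l + 1) / 2 = l := by omega
    simp only [Dq, h1, h2, h3, h4, if_pos rfl]
    norm_num
    ring
  · subst hl
    have h1 : (2 * l + 1) % 2 = 1 := by omega
    have h2 : (2 * l + 1) / 2 = l := by omega
    have h3 : (2 * l + 1 + 1) % 2 = 0 := by omega
    have h4 : (2 * l + 1 + 1) / 2 = l + 1 := by omega
    simp only [Dq, h1, h2, h3, h4, if_pos rfl]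
    norm_num
    ring

lemma Dq_sub_nonneg (hq0 : 0 < q) (hq : q < 1 / 6) (n : ℕ) :
    0 ≤ Dq q n - Dq q (n + 1) := by
  rw [Dq_sub_succ]
  have : (0:ℝ) < q ^ (n / 2) := by positivity
  split <;> nlinarith

lemma Dq_pos (hq0 : 0 < q) (hq : q < 1 / 6) (n : ℕ) : 0 < Dq q n := by
  have : (0:ℝ) < q ^ (n / 2) := by positivity
  unfold Dq; split <;> nlinarith

lemma two_Dq_lt (hq0 : 0 < q) (hq : q < 1 / 6) (n : ℕ) :
    2 * Dq q (n + 1) < Dq q n := by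
  rcases Nat.even_or_odd n with ⟨l, hl⟩ | ⟨l, hl⟩
  · subst hl
    have h1 : (l + l) % 2 = 0 := by omega
    have h2 : (l + l) / 2 = l := by omega
    have h3 : (l + l + 1) % 2 = 1 := by omega
    have h4 : (l + l + 1) / 2 = l := by omega
    have : (0:ℝ) < q ^ l := by positivity
    simp only [Dq, h1, h2, h3, h4, if_pos rfl]
    norm_num
    nlinarith [pow_succ q l]
  · subst hl
    have h1 : (2 * l + 1) % 2 = 1 := by omega
    have h2 : (2 * l + 1) / 2 = l := by omega
    have h3 : (2 * l + 1 + 1) % 2 = 0 := by omega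
    have h4 : (2 * l + 1 + 1) / 2 = l + 1 := by omega
    have : (0:ℝ) < q ^ l := by positivity
    simp only [Dq, h1, h2, h3, h4, if_pos rfl]
    norm_num
    nlinarith [pow_succ q l]

lemma Dq_tendsto (hq0 : 0 < q) (hq : q < 1 / 6) :
    Filter.Tendsto (Dq q) Filter.atTop (nhds 0) := by
  have hd2 : Filter.Tendsto (fun n : ℕ => n / 2) Filter.atTop Filter.atTop :=
    Filter.tendsto_atTop_atTop.2 fun b => ⟨2 * b, fun n hn => by omega⟩
  have hpow : Filter.Tendsto (fun n : ℕ => q ^ (n / 2)) Filter.atTop (nhds 0) :=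
    (tendsto_pow_atTop_nhds_zero_of_lt_one hq0.le (by linarith)).comp hd2
  refine squeeze_zero (fun n => (Dq_pos hq0 hq n).le) (fun n => ?_) hpow
  have : (0:ℝ) < q ^ (n / 2) := by positivity
  unfold Dq; split <;> nlinarith

lemma hasSum_Dq (hq0 : 0 < q) (hq : q < 1 / 6) (n : ℕ) :
    HasSum (fun j => Dq q (n + j) - Dq q (n + j + 1)) (Dq q n) := by
  rw [hasSum_iff_tendsto_nat_of_nonneg (fun j => Dq_sub_nonneg hq0 hq (n + j))]
  have hps : ∀ N, ∑ i ∈ Finset.range N, (Dq q (n + i) - Dq q (n + i + 1))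
      = Dq q n - Dq q (n + N) := by
    intro N
    simpa [add_assoc] using Finset.sum_range_sub' (fun j => Dq q (n + j)) N
  simp only [hps]
  have : Filter.Tendsto (fun N : ℕ => Dq q (n + N)) Filter.atTop (nhds 0) :=
    (Dq_tendsto hq0 hq).comp (Filter.tendsto_atTop_atTop.2 fun b => ⟨b, fun m hm => by omega⟩)
  simpa using (tendsto_const_nhds (x := Dq q n)).sub this

lemma dSeq_eq_Dq (hq0 : 0 < q) (hq : q < 1 / 6) (a : ℕ → ℝ)
    (haq : a = fun n => if n % 2 = 1 then (1 - 6 * q) / 5 else (2 - 7 * q) / (2 + 3 * q)) :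
    ∀ n, dSeq a n = Dq q n := by
  have h23 : (2:ℝ) + 3 * q ≠ 0 := by positivity
  intro n
  induction n with
  | zero => simp [dSeq, Dq]
  | succ n ih =>
    have hstep : dSeq a (n + 1) = dSeq a n * ((1 - a (n + 1)) / 2) := by
      rw [dSeq, dSeq, Finset.prod_Icc_succ_top (by omega)]
    rw [hstep, ih, haq]
    rcases Nat.even_or_odd n with ⟨l, hl⟩ | ⟨l, hl⟩
    · subst hl
      have h1 : (l + l) % 2 = 0 := by omega
      have h2 : (l + l) / 2 = l := by omega
      have h3 : (l + l + 1) % 2 = 1 := by omega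
      have h4 : (l + l + 1) / 2 = l := by omega
      simp only [Dq, h1, h2, h3, h4, if_pos rfl, if_neg (by omega : ¬(0:ℕ) = 1)]
      norm_num
      ring
    · subst hl
      have h1 : (2 * l + 1) % 2 = 1 := by omega
      have h2 : (2 * l + 1) / 2 = l := by omega
      have h3 : (2 * l + 1 + 1) % 2 = 0 := by omega
      have h4 : (2 * l + 1 + 1) / 2 = l + 1 := by omega
      simp only [Dq, h1, h2, h3, h4, if_pos rfl]
      norm_num
      field_simp
      ring

lemma x_eq_aux (hq0 : 0 < q) (hq : q < 1 / 6) (x : ℕ → ℝ)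
    (hx : x = fun n => (if n % 2 = 1 then (3 : ℝ) else 2) * q ^ ((n - 1) / 2)) (n : ℕ) :
    x (n + 1) = (5 / (1 - q)) * (Dq q n - Dq q (n + 1)) := by
  have h1q : (1:ℝ) - q ≠ 0 := by intro h; rw [sub_eq_zero] at h; rw [← h] at hq; norm_num at hq
  rw [hx, Dq_sub_succ]
  simp only []
  have h5 : (n + 1 - 1) / 2 = n / 2 := by omega
  rw [h5]
  split
  · field_simp
  · field_simp

end AuxMG

/-- For `0 < q < 1/6`, the multigeometric series `(3,2;q)` is fast convergent and its
achievement set satisfies `E(x) = (5/(1-q)) · C(a)`, where `a` is the `2`-periodic sequence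
with `a_{2n-1} = (1-6q)/5` and `a_{2n} = (2-7q)/(2+3q)`. -/
theorem achievement_multigeometric (q : ℝ) (hq0 : 0 < q) (hq : q < 1 / 6)
    (x : ℕ → ℝ) (hx : x = fun n => (if n % 2 = 1 then (3 : ℝ) else 2) * q ^ ((n - 1) / 2))
    (a : ℕ → ℝ)
    (haq : a = fun n => if n % 2 = 1 then (1 - 6 * q) / 5 else (2 - 7 * q) / (2 + 3 * q)) :
    (∀ n, 1 ≤ n → ∑' j : ℕ, x (n + 1 + j) < x n) ∧
      achievementSet x = (5 / (1 - q)) • cantorSet a := by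
  classical
  have h1q : (0:ℝ) < 1 - q := by linarith
  set c : ℝ := 5 / (1 - q) with hcdef
  have hc0 : 0 < c := by positivity
  have hcne : c ≠ 0 := hc0.ne'
  have hd : ∀ n, dSeq a n = Dq q n := dSeq_eq_Dq hq0 hq a haq
  have hxe : ∀ n, x (n + 1) = c * (Dq q n - Dq q (n + 1)) := x_eq_aux hq0 hq x hx
  constructor
  · -- fast convergence
    intro n hn
    obtain ⟨m, rfl⟩ : ∃ m, n = m + 1 := ⟨n - 1, by omega⟩
    have hsum : HasSum (fun j => x (m + 1 + 1 + j)) (c * Dq q (m + 1)) := by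
      have h := (hasSum_Dq hq0 hq (m + 1)).mul_left c
      have hfe : (fun j => x (m + 1 + 1 + j))
          = fun j => c * (Dq q (m + 1 + j) - Dq q (m + 1 + j + 1)) := by
        funext j
        have h1 : m + 1 + 1 + j = (m + 1 + j) + 1 := by omega
        rw [h1, hxe (m + 1 + j)]
      rw [hfe]
      exact h
    rw [hsum.tsum_eq, hxe m]
    have h2 := two_Dq_lt hq0 hq m
    have : Dq q (m + 1) < Dq q m - Dq q (m + 1) := by linarith
    exact mul_lt_mul_of_pos_left this hc0
  · -- achievement set equality
    ext y
    constructor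
    · rintro ⟨A, hA1, hA2⟩
      have h0A : (0:ℕ) ∉ A := fun h => by simpa using hA1 h
      set e : ℕ → ℝ := A.indicator (fun m => Dq q (m - 1) - Dq q m) with he_def
      have hxeA : ∀ j, A.indicator x j = c * e j := by
        intro j
        by_cases hj : j ∈ A
        · have hj1 : 1 ≤ j := hA1 hj
          obtain ⟨m, rfl⟩ : ∃ m, j = m + 1 := ⟨j - 1, by omega⟩
          rw [he_def, Set.indicator_of_mem hj, Set.indicator_of_mem hj, hxe m]
          simp
        · rw [he_def, Set.indicator_of_notMem hj, Set.indicator_of_notMem hj, mul_zero]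
      have he : HasSum e (c⁻¹ * y) := by
        have h := hA2
        have hfe : A.indicator x = fun j => c * e j := funext hxeA
        rw [hfe] at h
        have h2 := h.mul_left c⁻¹
        have hfe2 : (fun j => c⁻¹ * (c * e j)) = e := by
          funext j; rw [inv_mul_cancel_left₀ hcne]
        rwa [hfe2] at h2
      have he_nonneg : ∀ j, 0 ≤ e j := by
        intro j
        rw [he_def]
        by_cases hj : j ∈ A
        · rw [Set.indicator_of_mem hj]
          by_cases hj1 : 1 ≤ j
          · obtain ⟨m, rfl⟩ : ∃ m, j = m + 1 := ⟨j - 1, by omega⟩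
            simpa using Dq_sub_nonneg hq0 hq m
          · interval_cases j; simp
        · rw [Set.indicator_of_notMem hj]
      have hz : c⁻¹ * y ∈ cantorSet a := by
        refine Set.mem_iInter.2 fun n => ?_
        set t : List ℕ := (List.range n).map (fun j => if (j + 1) ∈ A then 1 else 0) with ht_def
        have htlen : t.length = n := by simp [ht_def]
        have htmem : ∀ j ∈ t, j ≤ 1 := by
          intro j hj
          rcases List.mem_map.1 hj with ⟨i, _, rfl⟩
          split <;> omega
        have hIl : Il a t = ∑ j ∈ Finset.range n, e (j + 1) := by
          rw [Il, htlen]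
          refine Finset.sum_congr rfl fun j hj => ?_
          have hjn : j < n := Finset.mem_range.1 hj
          have hgd : t.getD j 0 = if (j + 1) ∈ A then 1 else 0 := by
            rw [ht_def, List.getD_eq_getElem _ _ (by simpa [htlen, ht_def] using hjn)]
            simp
          rw [hgd, hd j, hd (j + 1), he_def]
          by_cases hj1 : (j + 1) ∈ A
          · rw [if_pos hj1, Set.indicator_of_mem hj1]; simp
          · rw [if_neg hj1, Set.indicator_of_notMem hj1]; simp
        have hzdecomp : ∑ i ∈ Finset.range (n + 1), e i + ∑' j, e (j + (n + 1)) = c⁻¹ * y := by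
          rw [he.summable.sum_add_tsum_nat_add (n + 1), he.tsum_eq]
        have hsum0 : ∑ i ∈ Finset.range (n + 1), e i = Il a t := by
          rw [Finset.sum_range_succ' e n, hIl]
          have : e 0 = 0 := by rw [he_def, Set.indicator_of_notMem h0A]
          rw [this, add_zero]
        set R : ℝ := ∑' j, e (j + (n + 1)) with hR_def
        have hsummable_tail : Summable (fun j => Dq q (n + j) - Dq q (n + j + 1)) :=
          (hasSum_Dq hq0 hq n).summable
        have hle_tail : ∀ j, e (j + (n + 1)) ≤ Dq q (n + j) - Dq q (n + j + 1) := by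
          intro j
          have h1 : j + (n + 1) = (n + j) + 1 := by omega
          rw [h1, he_def]
          by_cases hj : (n + j + 1) ∈ A
          · rw [Set.indicator_of_mem hj]; simp
          · rw [Set.indicator_of_notMem hj]
            exact Dq_sub_nonneg hq0 hq (n + j)
        have hR0 : 0 ≤ R := tsum_nonneg fun j => he_nonneg _
        have hRle : R ≤ Dq q n := by
          calc R ≤ ∑' j, (Dq q (n + j) - Dq q (n + j + 1)) :=
                Summable.tsum_le_tsum hle_tail ((summable_nat_add_iff (n + 1)).2 he.summable)
                  hsummable_tail
            _ = Dq q n := (hasSum_Dq hq0 hq n).tsum_eq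
        refine Set.mem_iUnion₂.2 ⟨t, ⟨htlen, htmem⟩, ?_⟩
        rw [hd n]
        constructor
        · rw [← hzdecomp, hsum0]; linarith
        · rw [← hzdecomp, hsum0]; linarith
      rw [Set.mem_smul_set]
      exact ⟨c⁻¹ * y, hz, by rw [smul_eq_mul, mul_inv_cancel_left₀ hcne]⟩
    · intro hy
      rw [Set.mem_smul_set] at hy
      obtain ⟨z, hz, rfl⟩ := hy
      have hsummable0 : Summable (fun j => Dq q j - Dq q (j + 1)) := by
        have := (hasSum_Dq hq0 hq 0).summable
        simpa using this
      set F : (ℕ → Bool) → ℝ :=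
        fun g => ∑' j, (if g j then Dq q j - Dq q (j + 1) else 0) with hF_def
      have hFcont : Continuous F := by
        refine continuous_tsum (fun j => ?_) hsummable0 (fun j g => ?_)
        · exact (continuous_of_discreteTopology
            (f := fun b : Bool => if b then Dq q j - Dq q (j + 1) else 0)).comp
              (continuous_apply j)
        · by_cases hg : g j
          · rw [if_pos hg, Real.norm_eq_abs, abs_of_nonneg (Dq_sub_nonneg hq0 hq j)]
          · rw [if_neg hg, norm_zero]
            exact Dq_sub_nonneg hq0 hq j
      have hKclosed : IsClosed (Set.range F) := (isCompact_range hFcont).isClosed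
      have hzK : z ∈ Set.range F := by
        rw [← hKclosed.closure_eq]
        rw [Metric.mem_closure_iff]
        intro ε hε
        obtain ⟨n, hn⟩ := ((Dq_tendsto hq0 hq).eventually (gt_mem_nhds hε)).exists
        have hzn := Set.mem_iInter.1 hz n
        obtain ⟨t, ⟨htlen, htmem⟩, hIcc⟩ := Set.mem_iUnion₂.1 hzn
        set g : ℕ → Bool := fun j => t.getD j 0 == 1 with hg_def
        refine ⟨F g, Set.mem_range_self g, ?_⟩
        have hFg : F g = Il a t := by
          rw [hF_def]
          simp only []
          rw [tsum_eq_sum (s := Finset.range n) (fun b hb => ?_), Il, htlen]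
          · refine Finset.sum_congr rfl fun j hj => ?_
            have hjn : j < n := Finset.mem_range.1 hj
            have hjlt : j < t.length := by rw [htlen]; exact hjn
            have hv : t.getD j 0 = 0 ∨ t.getD j 0 = 1 := by
              have := htmem _ (List.getD_eq_getElem t 0 hjlt ▸ List.getElem_mem hjlt)
              omega
            rw [hd j, hd (j + 1)]
            rcases hv with hv | hv <;> simp only [hg_def] <;> rw [hv] <;> norm_num
          · have hb2 : t.length ≤ b := by
              rw [htlen]
              exact le_of_not_gt fun h => hb (Finset.mem_range.2 h)
            simp only [hg_def]
            rw [List.getD_eq_default t 0 hb2]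
            norm_num
        rw [hFg, Real.dist_eq]
        obtain ⟨h1, h2⟩ := hIcc
        rw [hd n] at h2
        rw [abs_of_nonneg (by linarith)]
        linarith [Dq_pos hq0 hq n]
      obtain ⟨g, hg⟩ := hzK
      have hsummand : HasSum (fun j => if g j then Dq q j - Dq q (j + 1) else 0) z := by
        have hs : Summable (fun j => if g j then Dq q j - Dq q (j + 1) else 0) := by
          refine Summable.of_nonneg_of_le (fun j => ?_) (fun j => ?_) hsummable0
          · split
            · exact Dq_sub_nonneg hq0 hq j
            · exact le_refl 0
          · split
            · exact le_refl _
            · exact Dq_sub_nonneg hq0 hq j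
        exact hs.hasSum_iff.2 hg
      set A : Set ℕ := {m | 1 ≤ m ∧ g (m - 1) = true} with hA_def
      refine ⟨A, fun m hm => hm.1, ?_⟩
      have hmain : HasSum (fun j => A.indicator x (j + 1)) (c * z) := by
        have h := hsummand.mul_left c
        have hfe : (fun j => A.indicator x (j + 1))
            = fun j => c * (if g j then Dq q j - Dq q (j + 1) else 0) := by
          funext j
          by_cases hgj : g j
          · have hjA : (j + 1) ∈ A := ⟨by omega, by simpa using hgj⟩
            rw [Set.indicator_of_mem hjA, if_pos hgj, hxe j]
          · have hjA : (j + 1) ∉ A := by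
              intro h
              exact hgj (by simpa using h.2)
            rw [Set.indicator_of_notMem hjA, if_neg hgj, mul_zero]
        rw [hfe]
        exact h
      have := (hasSum_nat_add_iff (f := A.indicator x) 1).1 hmain
      have h0 : A.indicator x 0 = 0 := by
        refine Set.indicator_of_notMem (fun h => ?_) x
        have := h.1
        omega
      rw [smul_eq_mul]
      simpa [h0] using this
end CCS
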